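/- Let C → Q (with map φ) be a Girard couple with cyclic dualizing element d. Then e := d^⊥ = ⋁{a ∈ Q : a·d ≤ d} is a two-sided unit for the multiplication of Q, and e acts as a unit on the Q-bimodule C: e·c = c·e = c for all c ∈ C. In particular every Girard couple is unital. -/

import Mathlib

/-- A quantale: a complete lattice with an associative multiplication
distributing over arbitrary joins in both variables. -/
class Quantale' (α : Type*) extends CompleteLattice α, Mul α where
  mul_assoc : ∀ a b c : α, a * b * c = a * (b * c)
  mul_sSup : ∀ (a : α) (s : Set α), a * sSup s = ⨆ b ∈ s, a * b
  sSup_mul : ∀ (s : Set α) (a : α), sSup s * a = ⨆ b ∈ s, b * a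

/-- A couple of quantales: a quantale `Q`, a quantale `C` which is also a
`Q`-bimodule, and a coupling map `φ : C → Q` which is a join-preserving
`Q`-bimodule homomorphism satisfying `φ(c₁)·c₂ = c₁·φ(c₂) = c₁·c₂`. -/
structure Couple (C Q : Type*) [Quantale' C] [Quantale' Q] where
  φ : C → Q
  /-- the left action of `Q` on `C` -/
  act : Q → C → C
  /-- the right action of `Q` on `C` -/
  actr : C → Q → C
  act_sSup : ∀ (a : Q) (s : Set C), act a (sSup s) = ⨆ c ∈ s, act a c
  sSup_act : ∀ (s : Set Q) (c : C), act (sSup s) c = ⨆ a ∈ s, act a c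
  actr_sSup : ∀ (c : C) (s : Set Q), actr c (sSup s) = ⨆ a ∈ s, actr c a
  sSup_actr : ∀ (s : Set C) (a : Q), actr (sSup s) a = ⨆ c ∈ s, actr c a
  act_mul : ∀ (a b : Q) (c : C), act (a * b) c = act a (act b c)
  actr_mul : ∀ (c : C) (a b : Q), actr c (a * b) = actr (actr c a) b
  act_actr : ∀ (a : Q) (c : C) (b : Q), actr (act a c) b = act a (actr c b)
  φ_sSup : ∀ s : Set C, φ (sSup s) = ⨆ c ∈ s, φ c
  φ_act : ∀ (a : Q) (c : C), φ (act a c) = a * φ c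
  φ_actr : ∀ (c : C) (a : Q), φ (actr c a) = φ c * a
  couple_left : ∀ c₁ c₂ : C, act (φ c₁) c₂ = c₁ * c₂
  couple_right : ∀ c₁ c₂ : C, actr c₁ (φ c₂) = c₁ * c₂

/-- A Girard couple: a couple together with a cyclic dualizing element `d ∈ C`. -/
structure GirardCouple (C Q : Type*) [Quantale' C] [Quantale' Q] extends Couple C Q where
  d : C
  cyclic : ∀ (a : Q) (c : C), act a c ≤ d ↔ actr c a ≤ d
  /-- `d ⧸ (a → d) = a` for `a ∈ Q` -/
  dualizing_Q₁ : ∀ a : Q, sSup {b : Q | act b (sSup {c : C | actr c a ≤ d}) ≤ d} = a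
  /-- `(d ⧸ a) → d = a` for `a ∈ Q` -/
  dualizing_Q₂ : ∀ a : Q, sSup {b : Q | actr (sSup {c : C | act a c ≤ d}) b ≤ d} = a
  /-- `d ⧸ (c → d) = c` for `c ∈ C` -/
  dualizing_C₁ : ∀ c : C, sSup {c' : C | act (sSup {a : Q | actr c a ≤ d}) c' ≤ d} = c
  /-- `(d ⧸ c) → d = c` for `c ∈ C` -/
  dualizing_C₂ : ∀ c : C, sSup {c' : C | actr c' (sSup {a : Q | act a c ≤ d}) ≤ d} = c

section Aux
variable {C Q : Type*} [Quantale' C] [Quantale' Q] (gc : GirardCouple C Q)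

private lemma act_mono (a : Q) {c c' : C} (h : c ≤ c') : gc.act a c ≤ gc.act a c' := by
  have := gc.act_sSup a {c, c'}
  have hs : sSup {c, c'} = c' := by
    simp [sSup_pair, sup_eq_right.mpr h]
  rw [hs] at this
  rw [this]
  exact le_iSup₂_of_le c (Set.mem_insert _ _) le_rfl

private lemma e_act_d : gc.act (sSup {b : Q | gc.act b gc.d ≤ gc.d}) gc.d ≤ gc.d := by
  rw [gc.sSup_act]
  exact iSup₂_le fun b hb => hb

private lemma lemA (x : C) :
    gc.act (sSup {b : Q | gc.act b gc.d ≤ gc.d}) x ≤ gc.d ↔ x ≤ gc.d := by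
  constructor
  · intro h
    have hd := gc.dualizing_C₁ gc.d
    have hset : {a : Q | gc.actr gc.d a ≤ gc.d} = {b : Q | gc.act b gc.d ≤ gc.d} := by
      ext a; exact (gc.cyclic a gc.d).symm
    rw [hset] at hd
    calc x ≤ sSup {c' : C | gc.act (sSup {b : Q | gc.act b gc.d ≤ gc.d}) c' ≤ gc.d} :=
            le_sSup h
      _ = gc.d := hd
  · intro h
    exact le_trans (act_mono gc _ h) (e_act_d gc)

private lemma lemA' (x : C) :
    gc.actr x (sSup {b : Q | gc.act b gc.d ≤ gc.d}) ≤ gc.d ↔ x ≤ gc.d := by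
  rw [← gc.cyclic]; exact lemA gc x

private lemma act_e (c : C) : gc.act (sSup {b : Q | gc.act b gc.d ≤ gc.d}) c = c := by
  set e := sSup {b : Q | gc.act b gc.d ≤ gc.d} with he
  have hset : {a : Q | gc.actr (gc.act e c) a ≤ gc.d} = {a : Q | gc.actr c a ≤ gc.d} := by
    ext a
    rw [Set.mem_setOf_eq, Set.mem_setOf_eq, gc.act_actr, lemA]
  have h1 := gc.dualizing_C₁ (gc.act e c)
  rw [hset] at h1
  rw [← h1, gc.dualizing_C₁ c]

private lemma actr_e (c : C) : gc.actr c (sSup {b : Q | gc.act b gc.d ≤ gc.d}) = c := by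
  set e := sSup {b : Q | gc.act b gc.d ≤ gc.d} with he
  have hset : {a : Q | gc.act a (gc.actr c e) ≤ gc.d} = {a : Q | gc.act a c ≤ gc.d} := by
    ext a
    rw [Set.mem_setOf_eq, Set.mem_setOf_eq, ← gc.act_actr, lemA']
  have h1 := gc.dualizing_C₂ (gc.actr c e)
  rw [hset] at h1
  rw [← h1, gc.dualizing_C₂ c]

end Aux

/-- In a Girard couple, `e = d^⊥` is a unit for `Q` and acts as a unit on `C`;
in particular every Girard couple is unital. -/
theorem stmt8 {C Q : Type*} [Quantale' C] [Quantale' Q] (gc : GirardCouple C Q) :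
    (∀ a : Q, sSup {b : Q | gc.act b gc.d ≤ gc.d} * a = a ∧
              a * sSup {b : Q | gc.act b gc.d ≤ gc.d} = a) ∧
    (∀ c : C, gc.act (sSup {b : Q | gc.act b gc.d ≤ gc.d}) c = c ∧
              gc.actr c (sSup {b : Q | gc.act b gc.d ≤ gc.d}) = c) := by
  set e := sSup {b : Q | gc.act b gc.d ≤ gc.d} with he
  refine ⟨fun a => ⟨?_, ?_⟩, fun c => ⟨act_e gc c, actr_e gc c⟩⟩
  · have hset : {c : C | gc.actr c (e * a) ≤ gc.d} = {c : C | gc.actr c a ≤ gc.d} := by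
      ext c
      rw [Set.mem_setOf_eq, Set.mem_setOf_eq, gc.actr_mul, actr_e]
    have h1 := gc.dualizing_Q₁ (e * a)
    rw [hset] at h1
    rw [← h1, gc.dualizing_Q₁ a]
  · have hset : {c : C | gc.actr c (a * e) ≤ gc.d} = {c : C | gc.actr c a ≤ gc.d} := by
      ext c
      rw [Set.mem_setOf_eq, Set.mem_setOf_eq, gc.actr_mul, actr_e]
    have h1 := gc.dualizing_Q₁ (a * e)
    rw [hset] at h1
    rw [← h1, gc.dualizing_Q₁ a]
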